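/- arXiv:0808.0353 — 4 statements merged into one kernel-verified Lean document; each statement's English description precedes it below -/
import Mathlib

section
/- Let {(p_k, U_k)}_{k=1}^N be an ensemble of unitaries on C^d such that the map T(ω) = ∑_k p_k (U_k ⊗ Ū_k)† ω (U_k ⊗ Ū_k) equals the U⊗Ū-twirl T_{U⊗Ū} (i.e., the ensemble is a unitary 2-design). Then for every density matrix ρ on C^d, ∑_k p_k U_k ρ U_k† = I/d, i.e., the ensemble is a unitary 1-design (perfect encryption). -/
open Matrix Kronecker BigOperators
open scoped ComplexOrder

/-- The maximally entangled state projector `Φ_d = (1/d) ∑_{i,j} |ii⟩⟨jj|` on `ℂ^d ⊗ ℂ^d`. -/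
noncomputable def maxEnt (d : ℕ) : Matrix (Fin d × Fin d) (Fin d × Fin d) ℂ :=
  (1 / (d : ℂ)) • Matrix.of (fun p q => if p.1 = p.2 ∧ q.1 = q.2 then 1 else 0)

/-- Entrywise complex conjugate of a matrix. -/
def conjMat {d : ℕ} (U : Matrix (Fin d) (Fin d) ℂ) : Matrix (Fin d) (Fin d) ℂ :=
  U.map (starRingEnd ℂ)

/-- The `U ⊗ Ū`-twirl: projection onto the isotropic operators. -/
noncomputable def twirl {d : ℕ} (X : Matrix (Fin d × Fin d) (Fin d × Fin d) ℂ) :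
    Matrix (Fin d × Fin d) (Fin d × Fin d) ℂ :=
  (X * maxEnt d).trace • maxEnt d +
    ((X * (1 - maxEnt d)).trace / ((d : ℂ) ^ 2 - 1)) • (1 - maxEnt d)

lemma kron_conjT {d : ℕ} (A B : Matrix (Fin d) (Fin d) ℂ) : (A ⊗ₖ B)ᴴ = Aᴴ ⊗ₖ Bᴴ := by
  ext ⟨i,j⟩ ⟨a,b⟩
  simp [Matrix.conjTranspose_apply, Matrix.kroneckerMap_apply]

lemma conjMat_sandwich {d : ℕ} {V : Matrix (Fin d) (Fin d) ℂ}
    (hV : V ∈ Matrix.unitaryGroup (Fin d) ℂ) : (conjMat V)ᴴ * conjMat V = 1 := by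
  have h1 : Vᴴ * V = 1 := hV.1
  have h2 : (conjMat V)ᴴ = Vᵀ := by
    ext i j; simp [conjMat, Matrix.conjTranspose_apply, Matrix.transpose_apply]
  have hc : conjMat V = (Vᴴ)ᵀ := by
    ext i j; simp [conjMat, Matrix.conjTranspose_apply, Matrix.transpose_apply]
  rw [h2, hc, ← Matrix.transpose_mul, h1, Matrix.transpose_one]

lemma sandwich_kron {d : ℕ} {V : Matrix (Fin d) (Fin d) ℂ}
    (hV : V ∈ Matrix.unitaryGroup (Fin d) ℂ) (M : Matrix (Fin d) (Fin d) ℂ) :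
    (V ⊗ₖ conjMat V)ᴴ * (M ⊗ₖ (1 : Matrix (Fin d) (Fin d) ℂ)) * (V ⊗ₖ conjMat V)
      = (Vᴴ * M * V) ⊗ₖ (1 : Matrix (Fin d) (Fin d) ℂ) := by
  rw [kron_conjT, ← Matrix.mul_kronecker_mul, ← Matrix.mul_kronecker_mul]
  rw [Matrix.mul_one, conjMat_sandwich hV]

lemma trace_kron_maxEnt {d : ℕ} (M : Matrix (Fin d) (Fin d) ℂ) :
    ((M ⊗ₖ (1 : Matrix (Fin d) (Fin d) ℂ)) * maxEnt d).trace = M.trace / d := by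
  simp only [Matrix.trace, Matrix.diag, Matrix.mul_apply, maxEnt, Matrix.kroneckerMap_apply,
    Matrix.one_apply, Fintype.sum_prod_type, Matrix.smul_apply, Matrix.of_apply, mul_ite, ite_and,
    mul_zero, mul_one, smul_eq_mul]
  simp [Finset.sum_ite_eq, Finset.sum_ite_eq', div_eq_mul_inv, mul_comm]
  rw [Finset.mul_sum]
  exact Finset.sum_congr rfl fun _ _ => mul_comm _ _

lemma one_sub_maxEnt_one : (1 : Matrix (Fin 1 × Fin 1) (Fin 1 × Fin 1) ℂ) - maxEnt 1 = 0 := by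
  ext p q
  have hp : p = q := Subsingleton.elim p q
  simp [maxEnt, hp, Matrix.one_apply, Subsingleton.elim q.1 q.2]

lemma twirl_kron_one {d : ℕ} (hd : 0 < d) (M : Matrix (Fin d) (Fin d) ℂ) :
    twirl (M ⊗ₖ (1 : Matrix (Fin d) (Fin d) ℂ)) = (M.trace / d) • 1 := by
  have hd0 : (d : ℂ) ≠ 0 := Nat.cast_ne_zero.mpr hd.ne'
  have t1 : ((M ⊗ₖ (1 : Matrix (Fin d) (Fin d) ℂ)) * maxEnt d).trace = M.trace / d :=
    trace_kron_maxEnt M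
  have t2 : ((M ⊗ₖ (1 : Matrix (Fin d) (Fin d) ℂ)) * (1 - maxEnt d)).trace
      = M.trace * d - M.trace / d := by
    rw [Matrix.mul_sub, Matrix.mul_one, Matrix.trace_sub, Matrix.trace_kronecker, t1,
      Matrix.trace_one]
    simp
  rw [twirl, t1, t2]
  have key : ((M.trace * d - M.trace / d) / ((d : ℂ) ^ 2 - 1)) • ((1 : Matrix (Fin d × Fin d) (Fin d × Fin d) ℂ) - maxEnt d)
      = (M.trace / d) • ((1 : Matrix (Fin d × Fin d) (Fin d × Fin d) ℂ) - maxEnt d) := by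
    rcases eq_or_lt_of_le (Nat.succ_le_of_lt hd) with hd1 | hd2
    · -- d = 1
      have : d = 1 := hd1.symm
      subst this
      rw [one_sub_maxEnt_one, smul_zero, smul_zero]
    · -- d ≥ 2
      have hne : ((d : ℂ) ^ 2 - 1) ≠ 0 := by
        have : ((d : ℂ) ^ 2) = ((d ^ 2 : ℕ) : ℂ) := by push_cast; ring
        rw [this, sub_ne_zero]
        intro h
        have : (d ^ 2 : ℕ) = 1 := by exact_mod_cast h
        nlinarith [this]
      congr 1
      field_simp
  rw [key, ← smul_add]
  congr 1
  abel

lemma one_design_dag {d N : ℕ} (hd : 0 < d)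
    (p : Fin N → ℝ)
    (U : Fin N → Matrix (Fin d) (Fin d) ℂ)
    (hU : ∀ k, U k ∈ Matrix.unitaryGroup (Fin d) ℂ)
    (hdesign : ∀ X : Matrix (Fin d × Fin d) (Fin d × Fin d) ℂ,
      ∑ k, (p k : ℂ) • ((U k ⊗ₖ conjMat (U k))ᴴ * X * (U k ⊗ₖ conjMat (U k))) = twirl X)
    (M : Matrix (Fin d) (Fin d) ℂ) :
    ∑ k, (p k : ℂ) • ((U k)ᴴ * M * (U k)) = (M.trace / d) • 1 := by
  have h := hdesign (M ⊗ₖ (1 : Matrix (Fin d) (Fin d) ℂ))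
  rw [twirl_kron_one hd] at h
  have h' : ∑ k, (p k : ℂ) • (((U k)ᴴ * M * (U k)) ⊗ₖ (1 : Matrix (Fin d) (Fin d) ℂ))
      = (M.trace / d) • 1 := by
    rw [← h]
    exact Finset.sum_congr rfl fun k _ => by rw [sandwich_kron (hU k)]
  set j0 : Fin d := ⟨0, hd⟩
  ext i a
  have := congrFun (congrFun h' (i, j0)) (a, j0)
  simp only [Matrix.sum_apply, Matrix.smul_apply, Matrix.kroneckerMap_apply, Matrix.one_apply,
    smul_eq_mul, if_pos rfl] at this ⊢
  simpa [Prod.ext_iff, mul_comm] using this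

lemma trace_std_mul {d : ℕ} (i j : Fin d) (X : Matrix (Fin d) (Fin d) ℂ) :
    (Matrix.single j i (1 : ℂ) * X).trace = X i j := by
  simp [Matrix.trace, Matrix.diag, Matrix.mul_apply, Matrix.single, ite_and,
    Finset.sum_ite_eq, Finset.sum_ite_eq']

/-- Every unitary 2-design is a unitary 1-design: if the ensemble `{(p_k, U_k)}`
implements the `U ⊗ Ū`-twirl, then it encrypts every density matrix to `I/d`. -/
theorem two_design_is_one_design {d N : ℕ}
    (p : Fin N → ℝ) (hp : ∀ k, 0 ≤ p k) (hp1 : ∑ k, p k = 1)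
    (U : Fin N → Matrix (Fin d) (Fin d) ℂ)
    (hU : ∀ k, U k ∈ Matrix.unitaryGroup (Fin d) ℂ)
    (hdesign : ∀ X : Matrix (Fin d × Fin d) (Fin d × Fin d) ℂ,
      ∑ k, (p k : ℂ) • ((U k ⊗ₖ conjMat (U k))ᴴ * X * (U k ⊗ₖ conjMat (U k))) = twirl X)
    (ρ : Matrix (Fin d) (Fin d) ℂ) (hρ : ρ.PosSemidef) (hρ1 : ρ.trace = 1) :
    ∑ k, (p k : ℂ) • (U k * ρ * (U k)ᴴ) = (1 / (d : ℂ)) • 1 := by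
  rcases Nat.eq_zero_or_pos d with hd | hd
  · subst hd; ext i a; exact i.elim0
  have key : ∀ A : Matrix (Fin d) (Fin d) ℂ,
      (A * ∑ k, (p k : ℂ) • (U k * ρ * (U k)ᴴ)).trace = A.trace / d := by
    intro A
    rw [Matrix.mul_sum, Matrix.trace_sum]
    have step : ∀ k, (A * ((p k : ℂ) • (U k * ρ * (U k)ᴴ))).trace
        = ((((p k : ℂ) • ((U k)ᴴ * A * (U k))) * ρ).trace) := by
      intro k
      rw [Matrix.mul_smul, Matrix.trace_smul, Matrix.smul_mul, Matrix.trace_smul]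
      congr 1
      rw [show A * (U k * ρ * (U k)ᴴ) = (A * U k * ρ) * (U k)ᴴ by noncomm_ring,
        Matrix.trace_mul_comm,
        show (U k)ᴴ * (A * U k * ρ) = ((U k)ᴴ * A * U k) * ρ by noncomm_ring]
    calc ∑ k, (A * ((p k : ℂ) • (U k * ρ * (U k)ᴴ))).trace
        = ∑ k, ((((p k : ℂ) • ((U k)ᴴ * A * (U k))) * ρ).trace) := Finset.sum_congr rfl fun k _ => step k
      _ = ((∑ k, ((p k : ℂ) • ((U k)ᴴ * A * (U k)))) * ρ).trace := by
          rw [Matrix.sum_mul, Matrix.trace_sum]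
      _ = (((A.trace / d) • (1 : Matrix (Fin d) (Fin d) ℂ)) * ρ).trace := by
          rw [one_design_dag hd p U hU hdesign A]
      _ = A.trace / d := by
          rw [Matrix.smul_mul, Matrix.one_mul, Matrix.trace_smul, hρ1]
          simp
  ext i j
  have h1 := key (Matrix.single j i (1 : ℂ))
  rw [trace_std_mul] at h1
  rw [h1]
  rcases eq_or_ne i j with rfl | hij
  · rw [Matrix.trace_single_eq_same]
    simp [Matrix.one_apply, one_div]
  · rw [Matrix.trace_single_eq_of_ne _ _ _ hij.symm]
    simp [Matrix.one_apply, hij]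
end

section
/- Let {(p_k, U_k)}_{k=1}^N be a unitary 2-design on C^d (d ≥ 2). Then N ≥ (d²−1)² + 1. -/
open Matrix Kronecker BigOperators

namespace TwoDesignAux

set_option linter.unusedSectionVars false

section General

variable {m : Type*} [Fintype m] [DecidableEq m]

lemma rank_add_le' (A B : Matrix m m ℂ) : (A + B).rank ≤ A.rank + B.rank := by
  rw [Matrix.rank, Matrix.rank, Matrix.rank, Matrix.mulVecLin_add]
  refine le_trans (Submodule.finrank_mono ?_)
    (Submodule.finrank_add_le_finrank_add_finrank _ _)
  rintro x ⟨v, rfl⟩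
  exact Submodule.add_mem_sup ⟨v, rfl⟩ ⟨v, rfl⟩

lemma rank_sum_le {α : Type*} (s : Finset α) (f : α → Matrix m m ℂ) :
    (∑ k ∈ s, f k).rank ≤ ∑ k ∈ s, (f k).rank := by
  classical
  induction s using Finset.cons_induction with
  | empty => simp
  | cons a s ha ih =>
      rw [Finset.sum_cons, Finset.sum_cons]
      exact le_trans (rank_add_le' _ _) (add_le_add_right ih _)

lemma rank_vecMulVec_le (w v : m → ℂ) : (vecMulVec w v).rank ≤ 1 := by
  rw [Matrix.vecMulVec_eq Unit]
  calc (replicateCol Unit w * replicateRow Unit v).rank ≤ (replicateRow Unit v).rank := Matrix.rank_mul_le_right _ _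
    _ ≤ Fintype.card Unit := Matrix.rank_le_card_height _
    _ = 1 := by simp

lemma rank_smul_le (c : ℂ) (A : Matrix m m ℂ) : (c • A).rank ≤ A.rank := by
  have h : c • A = (c • (1 : Matrix m m ℂ)) * A := by rw [smul_mul_assoc, one_mul]
  rw [h]; exact Matrix.rank_mul_le_right _ _

lemma sandwich_entry (V : Matrix m m ℂ) (a c b e : m) :
    (V * Matrix.single a c (1:ℂ) * Vᴴ) b e = V b a * star (V e c) := by
  rw [Matrix.mul_apply]
  rw [Finset.sum_eq_single c]
  · simp [Matrix.conjTranspose_apply]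
  · intro j _ hj
    rw [Matrix.mul_single_apply_of_ne (hbj := hj), zero_mul]
  · simp

lemma trace_stdBasis_mul (A : Matrix m m ℂ) (a c : m) :
    (Matrix.single a c (1:ℂ) * A).trace = A c a := by
  rw [Matrix.trace]
  rw [Finset.sum_eq_single a]
  · simp [Matrix.diag_apply]
  · intro i _ hi
    simp [Matrix.diag_apply, Matrix.single_mul_apply_of_ne (h := hi)]
  · simp

lemma mul_vecMulVec (A : Matrix m m ℂ) (u v : m → ℂ) :
    A * vecMulVec u v = vecMulVec (A.mulVec u) v := by
  ext i j
  simp only [Matrix.mul_apply, vecMulVec_apply, Matrix.mulVec, dotProduct,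
    Finset.sum_mul]
  exact Finset.sum_congr rfl fun k _ => by ring

lemma smul_vecMulVec (c : ℂ) (w v : m → ℂ) :
    c • vecMulVec w v = vecMulVec (c • w) v := by
  ext i j; simp [vecMulVec_apply, mul_assoc]

end General

variable {d : ℕ}

noncomputable def uu (d : ℕ) : Fin d × Fin d → ℂ := fun x => if x.1 = x.2 then 1 else 0

noncomputable def choiOf (A B : Matrix (Fin d × Fin d) (Fin d × Fin d) ℂ) :
    Matrix ((Fin d × Fin d) × (Fin d × Fin d)) ((Fin d × Fin d) × (Fin d × Fin d)) ℂ :=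
  Matrix.of fun x y => A y.1 x.1 * B x.2 y.2

lemma choiOf_mul (A B A' B' : Matrix (Fin d × Fin d) (Fin d × Fin d) ℂ) :
    choiOf A B * choiOf A' B' = choiOf (A' * A) (B * B') := by
  ext x z
  simp only [choiOf, Matrix.mul_apply, Matrix.of_apply]
  rw [Fintype.sum_prod_type, Finset.sum_mul_sum]
  exact Finset.sum_congr rfl fun y1 _ => Finset.sum_congr rfl fun y2 _ => by ring

lemma choiOf_add_left (A A' B : Matrix (Fin d × Fin d) (Fin d × Fin d) ℂ) :
    choiOf (A + A') B = choiOf A B + choiOf A' B := by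
  ext x y; simp [choiOf, add_mul]

lemma choiOf_add_right (A B B' : Matrix (Fin d × Fin d) (Fin d × Fin d) ℂ) :
    choiOf A (B + B') = choiOf A B + choiOf A B' := by
  ext x y; simp [choiOf, mul_add]

lemma choiOf_zero_left (B : Matrix (Fin d × Fin d) (Fin d × Fin d) ℂ) :
    choiOf 0 B = 0 := by ext x y; simp [choiOf]

lemma choiOf_zero_right (A : Matrix (Fin d × Fin d) (Fin d × Fin d) ℂ) :
    choiOf A 0 = 0 := by ext x y; simp [choiOf]

lemma choiOf_one : choiOf (1 : Matrix (Fin d × Fin d) (Fin d × Fin d) ℂ) 1 = 1 := by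
  ext ⟨a, b⟩ ⟨c, e⟩
  simp only [choiOf, Matrix.of_apply, Matrix.one_apply, Prod.mk.injEq]
  by_cases h1 : a = c <;> by_cases h2 : b = e <;> simp [h1, h2, eq_comm]

lemma maxEnt_eq : maxEnt d = (d : ℂ)⁻¹ • vecMulVec (uu d) (uu d) := by
  ext x y
  by_cases h1 : x.1 = x.2 <;> by_cases h2 : y.1 = y.2 <;>
    simp [maxEnt, uu, vecMulVec_apply, h1, h2]

lemma sum_uu : ∑ x : Fin d × Fin d, uu d x = (d : ℂ) := by
  rw [Fintype.sum_prod_type]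
  simp [uu]

lemma uu_dot_uu : uu d ⬝ᵥ uu d = (d : ℂ) := by
  have h : ∀ k : Fin d × Fin d, uu d k * uu d k = uu d k := by
    intro k; by_cases h : k.1 = k.2 <;> simp [uu, h]
  rw [dotProduct]
  rw [Finset.sum_congr rfl fun k _ => h k]
  exact sum_uu

lemma maxEnt_mul_self (hd : (d:ℂ) ≠ 0) : maxEnt d * maxEnt d = maxEnt d := by
  rw [maxEnt_eq, smul_mul_assoc, mul_smul_comm]
  rw [show vecMulVec (uu d) (uu d) * vecMulVec (uu d) (uu d)
      = (uu d ⬝ᵥ uu d) • vecMulVec (uu d) (uu d) from by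
    ext i j
    simp only [Matrix.mul_apply, vecMulVec_apply, Matrix.smul_apply, smul_eq_mul,
      dotProduct, Finset.sum_mul]
    exact Finset.sum_congr rfl fun k _ => by ring]
  rw [uu_dot_uu, smul_smul, smul_smul]
  rw [show (d:ℂ)⁻¹ * (d:ℂ)⁻¹ * (d:ℂ) = (d:ℂ)⁻¹ by field_simp]

lemma maxEnt_mulVec_uu (hd : (d:ℂ) ≠ 0) : (maxEnt d).mulVec (uu d) = uu d := by
  rw [maxEnt_eq]
  ext x
  simp only [Matrix.mulVec, dotProduct, Matrix.smul_apply, vecMulVec_apply, smul_eq_mul]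
  rw [show (∑ y : Fin d × Fin d, (d:ℂ)⁻¹ * (uu d x * uu d y) * uu d y)
      = (d:ℂ)⁻¹ * uu d x * (uu d ⬝ᵥ uu d) from by
    rw [dotProduct, Finset.mul_sum]; exact Finset.sum_congr rfl fun k _ => by ring]
  rw [uu_dot_uu, mul_comm, ← mul_assoc, mul_inv_cancel₀ hd, one_mul]

lemma rank_choiOf_maxEnt_left (S : Matrix (Fin d × Fin d) (Fin d × Fin d) ℂ) :
    (choiOf (maxEnt d) S).rank ≤ S.rank := by
  classical
  set G : Matrix ((Fin d × Fin d) × (Fin d × Fin d)) (Fin d × Fin d) ℂ :=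
    Matrix.of fun x b => uu d x.1 * (if x.2 = b then 1 else 0) with hG
  set H : Matrix (Fin d × Fin d) ((Fin d × Fin d) × (Fin d × Fin d)) ℂ :=
    Matrix.of fun b y => (d:ℂ)⁻¹ * uu d y.1 * (if b = y.2 then 1 else 0) with hH
  have hfac : choiOf (maxEnt d) S = G * (S * H) := by
    ext x y
    rw [Matrix.mul_apply, Finset.sum_eq_single x.2]
    · rw [Matrix.mul_apply, Finset.sum_eq_single y.2]
      · simp only [choiOf, Matrix.of_apply, hG, hH, maxEnt_eq, Matrix.smul_apply,
          vecMulVec_apply, smul_eq_mul, if_pos rfl, if_true]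
        ring
      · intro b' _ hb'
        simp [hH, hb']
      · simp
    · intro b _ hb
      simp [hG, Ne.symm hb]
    · simp
  rw [hfac]
  exact le_trans (Matrix.rank_mul_le_right _ _) (Matrix.rank_mul_le_left _ _)

lemma rank_choiOf_maxEnt_right (S : Matrix (Fin d × Fin d) (Fin d × Fin d) ℂ) :
    (choiOf S (maxEnt d)).rank ≤ S.rank := by
  classical
  set G : Matrix ((Fin d × Fin d) × (Fin d × Fin d)) (Fin d × Fin d) ℂ :=
    Matrix.of fun x a => (d:ℂ)⁻¹ * uu d x.2 * (if x.1 = a then 1 else 0) with hG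
  set H : Matrix (Fin d × Fin d) ((Fin d × Fin d) × (Fin d × Fin d)) ℂ :=
    Matrix.of fun c y => uu d y.2 * (if c = y.1 then 1 else 0) with hH
  have hfac : choiOf S (maxEnt d) = G * (Sᵀ * H) := by
    ext x y
    rw [Matrix.mul_apply, Finset.sum_eq_single x.1]
    · rw [Matrix.mul_apply, Finset.sum_eq_single y.1]
      · simp only [choiOf, Matrix.of_apply, hG, hH, maxEnt_eq, Matrix.smul_apply,
          vecMulVec_apply, smul_eq_mul, if_pos rfl, if_true, Matrix.transpose_apply]
        ring
      · intro c _ hc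
        simp [hH, hc]
      · simp
    · intro a _ ha
      simp [hG, Ne.symm ha]
    · simp
  rw [hfac]
  calc (G * (Sᵀ * H)).rank ≤ (Sᵀ * H).rank := Matrix.rank_mul_le_right _ _
    _ ≤ Sᵀ.rank := Matrix.rank_mul_le_left _ _
    _ = S.rank := Matrix.rank_transpose S

lemma one_le_rank_uu (hd : 0 < d) : 1 ≤ (vecMulVec (uu d) (uu d)).rank := by
  by_contra hcon
  push_neg at hcon
  have h0 : (vecMulVec (uu d) (uu d)).rank = 0 := by omega
  rw [Matrix.rank, Submodule.finrank_eq_zero] at h0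
  have hm : (vecMulVec (uu d) (uu d)).mulVec (uu d) = 0 := by
    have hmem : (vecMulVec (uu d) (uu d)).mulVecLin (uu d) ∈
        LinearMap.range (vecMulVec (uu d) (uu d)).mulVecLin :=
      LinearMap.mem_range_self _ _
    rw [h0] at hmem
    simpa using hmem
  have hx := congrFun hm (⟨0, hd⟩, ⟨0, hd⟩)
  simp only [Matrix.mulVec, dotProduct, vecMulVec_apply, Pi.zero_apply] at hx
  rw [show (∑ y : Fin d × Fin d, uu d (⟨0, hd⟩, ⟨0, hd⟩) * uu d y * uu d y)
      = uu d (⟨0, hd⟩, ⟨0, hd⟩) * (uu d ⬝ᵥ uu d) from by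
    rw [dotProduct, Finset.mul_sum]; exact Finset.sum_congr rfl fun k _ => by ring] at hx
  rw [uu_dot_uu] at hx
  norm_num [uu] at hx
  exact (Nat.cast_ne_zero.mpr hd.ne') hx

lemma rank_one_sub_maxEnt (hd : 0 < d) : (1 - maxEnt d).rank + 1 ≤ d * d := by
  have hdC : (d : ℂ) ≠ 0 := Nat.cast_ne_zero.mpr hd.ne'
  have hmul : (1 - maxEnt d) * vecMulVec (uu d) (uu d) = 0 := by
    rw [mul_vecMulVec]
    have h0 : (1 - maxEnt d).mulVec (uu d) = 0 := by
      rw [Matrix.sub_mulVec, Matrix.one_mulVec, maxEnt_mulVec_uu hdC, sub_self]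
    rw [h0]
    ext i j; simp [vecMulVec_apply]
  have hkey := Matrix.rank_add_rank_le_card_of_mul_eq_zero hmul
  have hcard : Fintype.card (Fin d × Fin d) = d * d := by simp
  calc (1 - maxEnt d).rank + 1
      ≤ (1 - maxEnt d).rank + (vecMulVec (uu d) (uu d)).rank :=
        add_le_add_right (one_le_rank_uu hd) _
    _ ≤ d * d := by rw [← hcard]; exact hkey

end TwoDesignAux

open TwoDesignAux in
/-- Any unitary 2-design in dimension `d ≥ 2` has at least `(d²−1)² + 1` elements. -/
theorem two_design_size_lower_bound {d N : ℕ} (hd : 2 ≤ d)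
    (p : Fin N → ℝ) (hp : ∀ k, 0 ≤ p k) (hp1 : ∑ k, p k = 1)
    (U : Fin N → Matrix (Fin d) (Fin d) ℂ)
    (hU : ∀ k, U k ∈ Matrix.unitaryGroup (Fin d) ℂ)
    (hdesign : ∀ X : Matrix (Fin d × Fin d) (Fin d × Fin d) ℂ,
      ∑ k, (p k : ℂ) • ((U k ⊗ₖ conjMat (U k)) * X * (U k ⊗ₖ conjMat (U k))ᴴ) = twirl X) :
    (d ^ 2 - 1) ^ 2 + 1 ≤ N := by
  classical
  have hd0 : 0 < d := by omega
  have hdC : (d : ℂ) ≠ 0 := Nat.cast_ne_zero.mpr hd0.ne'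
  have hdd4 : 4 ≤ d * d := Nat.mul_le_mul hd hd
  have ht : ((d : ℂ) ^ 2 - 1) ≠ 0 := by
    have h1 : ((d : ℂ) ^ 2) = ((d * d : ℕ) : ℂ) := by push_cast; ring
    rw [h1, sub_ne_zero]
    intro hcon
    have : (d * d : ℕ) = 1 := by exact_mod_cast hcon
    omega
  set P : Matrix (Fin d × Fin d) (Fin d × Fin d) ℂ := maxEnt d with hP
  set Pc : Matrix (Fin d × Fin d) (Fin d × Fin d) ℂ := 1 - maxEnt d with hPc
  have hPP : P * P = P := maxEnt_mul_self hdC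
  have hPPc : P * Pc = 0 := by
    rw [hPc, Matrix.mul_sub, Matrix.mul_one, hPP, sub_self]
  have hPcP : Pc * P = 0 := by
    rw [hPc, Matrix.sub_mul, Matrix.one_mul, hPP, sub_self]
  have hPcPc : Pc * Pc = Pc := by
    rw [hPc, Matrix.sub_mul, Matrix.one_mul, Matrix.mul_sub, Matrix.mul_one, hPP]
    abel
  set w : Fin N → ((Fin d × Fin d) × (Fin d × Fin d)) → ℂ :=
    fun k x => ((U k) ⊗ₖ conjMat (U k)) x.2 x.1 with hwdef
  set M : Matrix ((Fin d × Fin d) × (Fin d × Fin d)) ((Fin d × Fin d) × (Fin d × Fin d)) ℂ :=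
    choiOf P P + ((d : ℂ) ^ 2 - 1)⁻¹ • choiOf Pc Pc with hM
  -- M is the Choi matrix of the design
  have hw : M = ∑ k, (p k : ℂ) • vecMulVec (w k) (star (w k)) := by
    ext x y
    have h := congrArg (fun Z : Matrix (Fin d × Fin d) (Fin d × Fin d) ℂ => Z x.2 y.2)
      (hdesign (Matrix.single x.1 y.1 1))
    simp only [Matrix.sum_apply, Matrix.smul_apply, smul_eq_mul, twirl,
      Matrix.add_apply, trace_stdBasis_mul] at h
    have hlhs : ∀ k : Fin N,
        (p k : ℂ) * (((U k ⊗ₖ conjMat (U k)) * Matrix.single x.1 y.1 (1:ℂ) *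
          ((U k ⊗ₖ conjMat (U k)))ᴴ) x.2 y.2)
        = (p k : ℂ) * (w k x * star (w k y)) := by
      intro k
      rw [sandwich_entry, hwdef]
    rw [Finset.sum_congr rfl fun k _ => hlhs k] at h
    have hrhs : M x y = maxEnt d y.1 x.1 * maxEnt d x.2 y.2 +
        (1 - maxEnt d) y.1 x.1 / ((d : ℂ) ^ 2 - 1) * (1 - maxEnt d) x.2 y.2 := by
      rw [hM, hP, hPc]
      simp only [Matrix.add_apply, Matrix.smul_apply, choiOf, Matrix.of_apply, smul_eq_mul]
      ring
    rw [hrhs, ← h]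
    simp only [Matrix.sum_apply, Matrix.smul_apply, vecMulVec_apply, Pi.star_apply, smul_eq_mul]
  -- upper bound : rank M ≤ N
  have hrank_le : M.rank ≤ N := by
    rw [hw]
    calc (∑ k, (p k : ℂ) • vecMulVec (w k) (star (w k))).rank
        ≤ ∑ k : Fin N, ((p k : ℂ) • vecMulVec (w k) (star (w k))).rank :=
          rank_sum_le _ _
      _ ≤ ∑ _k : Fin N, 1 :=
          Finset.sum_le_sum fun k _ => le_trans (TwoDesignAux.rank_smul_le _ _) (TwoDesignAux.rank_vecMulVec_le _ _)
      _ = N := by simp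
  -- lower bound : rank M ≥ (d²-1)² + 1
  set A := choiOf P P with hA
  set B := choiOf Pc Pc with hB
  have hAA : A * A = A := by rw [hA, choiOf_mul, hPP]
  have hAB : A * B = 0 := by rw [hA, hB, choiOf_mul, hPcP, choiOf_zero_left]
  have hBA : B * A = 0 := by rw [hA, hB, choiOf_mul, hPPc, choiOf_zero_left]
  have hBB : B * B = B := by rw [hB, choiOf_mul, hPcPc]
  have hMQ : M * (A + ((d : ℂ) ^ 2 - 1) • B) = A + B := by
    rw [hM]
    simp only [Matrix.add_mul, Matrix.mul_add, smul_mul_assoc, mul_smul_comm, smul_smul]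
    rw [hAA, hAB, hBA, hBB]
    simp only [smul_zero, add_zero, zero_add, smul_smul]
    rw [mul_inv_cancel₀ ht, one_smul]
  have hQle : (A + B).rank ≤ M.rank := by
    rw [← hMQ]; exact Matrix.rank_mul_le_left _ _
  have hQR : (A + B) + (choiOf P Pc + choiOf Pc P) = 1 := by
    have h1 : choiOf (P + Pc) (P + Pc) = (1 : Matrix _ _ ℂ) := by
      rw [show P + Pc = 1 from by rw [hP, hPc]; abel]
      exact choiOf_one
    rw [choiOf_add_left, choiOf_add_right, choiOf_add_right] at h1
    rw [← h1, hA, hB]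
    abel
  have hone : (1 : Matrix ((Fin d × Fin d) × (Fin d × Fin d))
      ((Fin d × Fin d) × (Fin d × Fin d)) ℂ).rank = (d * d) * (d * d) := by
    rw [Matrix.rank_one]
    simp [Fintype.card_prod]
  have hsplit : (d * d) * (d * d) ≤ (A + B).rank +
      ((choiOf P Pc).rank + (choiOf Pc P).rank) := by
    rw [← hone, ← hQR]
    exact le_trans (rank_add_le' _ _) (add_le_add_right (rank_add_le' _ _) _)
  have hrPPc : (choiOf P Pc).rank ≤ Pc.rank := rank_choiOf_maxEnt_left Pc
  have hrPcP : (choiOf Pc P).rank ≤ Pc.rank := rank_choiOf_maxEnt_right Pc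
  have hrPc : Pc.rank + 1 ≤ d * d := rank_one_sub_maxEnt hd0
  -- final arithmetic
  have hNge : (d * d) * (d * d) ≤ N + 2 * Pc.rank := by
    calc (d * d) * (d * d) ≤ (A + B).rank + ((choiOf P Pc).rank + (choiOf Pc P).rank) := hsplit
      _ ≤ M.rank + (Pc.rank + Pc.rank) := add_le_add (hQle) (add_le_add hrPPc hrPcP)
      _ ≤ N + 2 * Pc.rank := by omega
  have hgoal : (d ^ 2 - 1) ^ 2 + 1 = (d * d - 1) * (d * d - 1) + 1 := by
    rw [pow_two, pow_two]
  rw [hgoal]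
  set s := d * d - 1 with hs
  have hm : d * d = s + 1 := by omega
  rw [hm] at hNge
  have hexp : (s + 1) * (s + 1) = s * s + 2 * s + 1 := by ring
  rw [hexp] at hNge
  have hr : Pc.rank ≤ s := by omega
  generalize hts : s * s = t at hNge ⊢
  omega
end

section
/- Let ρ, σ be density matrices on a Hilbert space of dimension D with ‖ρ − σ‖₁ ≤ θ ≤ 1/e. Then |S(ρ) − S(σ)| ≤ θ log D + H₂(θ), where S is von Neumann entropy and H₂ binary entropy (Fannes' inequality). -/
open Matrix BigOperators
open scoped ComplexOrder

open Module Real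
open scoped InnerProductSpace




-- scalar lemmas first
lemma etaMono {a b : ℝ} (ha : 0 ≤ a) (hab : a ≤ b) (hb : b ≤ (Real.exp 1)⁻¹) :
    negMulLog a ≤ negMulLog b := by
  rcases eq_or_lt_of_le ha with h0 | ha0
  · rw [← h0, negMulLog_zero]
    exact negMulLog_nonneg (le_trans ha hab)
      (hb.trans (by rw [inv_le_one_iff₀]; right; exact Real.one_le_exp zero_le_one))
  rcases eq_or_lt_of_le hab with rfl | hab0
  · exact le_refl _
  have hb0 : 0 < b := lt_of_le_of_lt ha0.le hab0
  have hlogb : Real.log b ≤ -1 := by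
    calc Real.log b ≤ Real.log (Real.exp 1)⁻¹ := Real.log_le_log hb0 hb
    _ = -1 := by rw [Real.log_inv, Real.log_exp]
  have h1 : Real.log b - Real.log a ≤ b / a - 1 := by
    rw [← Real.log_div hb0.ne' ha0.ne']
    exact Real.log_le_sub_one_of_pos (by positivity)
  have key : 0 ≤ (b - a) * (-Real.log b) + a * (Real.log a - Real.log b) := by
    have t1 : (b - a) * 1 ≤ (b - a) * (-Real.log b) := by
      apply mul_le_mul_of_nonneg_left (by linarith) (by linarith)
    have t2 : a * (Real.log a - Real.log b) ≥ a * (1 - b / a) := by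
      apply mul_le_mul_of_nonneg_left (by linarith) ha0.le
    have : a * (1 - b/a) = a - b := by field_simp
    nlinarith
  have expand : negMulLog b - negMulLog a = (b - a) * (-Real.log b) + a * (Real.log a - Real.log b) := by
    simp [negMulLog]; ring
  linarith

lemma etaSelfLe {t : ℝ} (ht : 0 < t) (ht1 : t ≤ (Real.exp 1)⁻¹) : t ≤ negMulLog t := by
  have hlogt : Real.log t ≤ -1 := by
    calc Real.log t ≤ Real.log (Real.exp 1)⁻¹ := Real.log_le_log ht ht1
    _ = -1 := by rw [Real.log_inv, Real.log_exp]
  have : t * 1 ≤ t * (-Real.log t) := mul_le_mul_of_nonneg_left (by linarith) ht.le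
  simpa [negMulLog, mul_comm] using by linarith

-- η(a+t) - η(a) ≤ η(t), and η(a) - η(a+t) ≤ η(t), for 0 ≤ a, 0 < t, a+t ≤ 1, t ≤ 1/e
lemma etaDiffAux {a t : ℝ} (ha : 0 ≤ a) (ht : 0 < t) (hat : a + t ≤ 1)
    (hte : t ≤ (Real.exp 1)⁻¹) :
    |negMulLog (a + t) - negMulLog a| ≤ negMulLog t := by
  have hte1 : t ≤ 1 := by linarith
  have hηt : 0 ≤ negMulLog t := negMulLog_nonneg ht.le hte1
  rw [abs_sub_le_iff]
  constructor
  · -- η(a+t) - η(a) ≤ η(t)  (subadditivity)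
    rcases eq_or_lt_of_le ha with h0 | ha0
    · rw [← h0]; simp
    have h1 : -a * Real.log (a + t) ≤ -a * Real.log a := by
      have := Real.log_le_log ha0 (by linarith : a ≤ a + t)
      nlinarith
    have h2 : -t * Real.log (a + t) ≤ -t * Real.log t := by
      have := Real.log_le_log ht (by linarith : t ≤ a + t)
      nlinarith
    have : negMulLog (a + t) = -a * Real.log (a+t) + -t * Real.log (a+t) := by
      simp [negMulLog]; ring
    simp only [negMulLog] at *
    linarith
  · -- η(a) - η(a+t) ≤ η(t)
    rcases eq_or_lt_of_le ha with h0 | ha0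
    · rw [← h0]; simpa using by linarith
    have hat0 : 0 < a + t := by linarith
    have h1 : Real.log (a + t) - Real.log a ≤ t / a := by
      rw [← Real.log_div hat0.ne' ha0.ne']
      have := Real.log_le_sub_one_of_pos (show 0 < (a+t)/a by positivity)
      have : (a + t)/a - 1 = t / a := by field_simp; ring
      linarith [Real.log_le_sub_one_of_pos (show 0 < (a+t)/a by positivity)]
    have h2 : Real.log (a + t) ≤ 0 := Real.log_nonpos hat0.le hat
    have expand : negMulLog a - negMulLog (a + t)
        = a * (Real.log (a+t) - Real.log a) + t * Real.log (a + t) := by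
      simp [negMulLog]; ring
    have b1 : a * (Real.log (a+t) - Real.log a) ≤ t := by
      calc a * (Real.log (a+t) - Real.log a) ≤ a * (t / a) := mul_le_mul_of_nonneg_left h1 ha0.le
      _ = t := by field_simp
    have b2 : t * Real.log (a + t) ≤ 0 := mul_nonpos_of_nonneg_of_nonpos ht.le h2
    have := etaSelfLe ht hte
    linarith

lemma etaDiff {a b : ℝ} (ha : 0 ≤ a) (hb : 0 ≤ b) (ha1 : a ≤ 1) (hb1 : b ≤ 1)
    (hd : |a - b| ≤ (Real.exp 1)⁻¹) :
    |negMulLog a - negMulLog b| ≤ negMulLog |a - b| := by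
  rcases lt_trichotomy a b with h | rfl | h
  · have := etaDiffAux ha (by linarith : (0:ℝ) < b - a) (by linarith)
      (by rwa [abs_of_neg (by linarith : a - b < 0), neg_sub] at hd)
    rw [abs_of_neg (by linarith : a - b < 0), neg_sub]
    rw [abs_sub_comm]
    simpa [show a + (b - a) = b by ring] using this
  · simp
  · have := etaDiffAux hb (by linarith : (0:ℝ) < a - b) (by linarith)
      (by rwa [abs_of_pos (by linarith : 0 < a - b)] at hd)
    rw [abs_of_pos (by linarith : 0 < a - b)]
    simpa [show b + (a - b) = a by ring] using this
lemma sumEta {ι : Type*} [Fintype ι] (ε : ι → ℝ) (hε : ∀ i, 0 ≤ ε i) :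
    ∑ i, negMulLog (ε i) ≤ (∑ i, ε i) * Real.log (Fintype.card ι)
      + negMulLog (∑ i, ε i) := by
  set s := ∑ i, ε i with hs
  rcases eq_or_lt_of_le (Finset.sum_nonneg fun i _ => hε i : (0:ℝ) ≤ s) with h0 | hs0
  · have hz : ∀ i ∈ Finset.univ, ε i = 0 :=
      (Finset.sum_eq_zero_iff_of_nonneg (fun i _ => hε i)).mp h0.symm
    have h1 : ∑ i, negMulLog (ε i) = 0 :=
      Finset.sum_eq_zero fun i hi => by rw [hz i hi, negMulLog_zero]
    rw [h1, hs, ← h0]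
    simp
  have hcard : 0 < (Fintype.card ι : ℝ) := by
    by_contra h
    push_neg at h
    have hc0 : Fintype.card ι = 0 := by exact_mod_cast le_antisymm h (by positivity)
    haveI : IsEmpty ι := Fintype.card_eq_zero_iff.mp hc0
    rw [Finset.univ_eq_empty, Finset.sum_empty] at hs0
    exact lt_irrefl _ hs0
  set D := (Fintype.card ι : ℝ) with hD
  have key : ∀ i, negMulLog (ε i) + ε i * Real.log s - ε i * Real.log D ≤ s / D - ε i := by
    intro i
    rcases eq_or_lt_of_le (hε i) with h0 | hi0
    · rw [← h0]; simp; positivity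
    have hlog : Real.log (s / (ε i * D)) ≤ s / (ε i * D) - 1 :=
      Real.log_le_sub_one_of_pos (by positivity)
    have hexp : Real.log (s / (ε i * D)) = Real.log s - Real.log (ε i) - Real.log D := by
      rw [Real.log_div hs0.ne' (by positivity), Real.log_mul hi0.ne' hcard.ne']
      ring
    have h2 : ε i * (Real.log s - Real.log (ε i) - Real.log D) ≤ ε i * (s / (ε i * D) - 1) :=
      mul_le_mul_of_nonneg_left (by rw [← hexp]; exact hlog) (hε i)
    have heq : ε i * (s / (ε i * D) - 1) = s / D - ε i := by
      field_simp
    simp only [negMulLog]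
    nlinarith [h2]
  have hsum := Finset.sum_le_sum (fun i (_ : i ∈ Finset.univ) => key i)
  simp only [Finset.sum_sub_distrib, Finset.sum_add_distrib, ← Finset.sum_mul] at hsum
  rw [Finset.sum_const, Finset.card_univ, nsmul_eq_mul] at hsum
  have hDp : (Fintype.card ι : ℝ) * (s / D) = s := by
    rw [← hD]; field_simp
  rw [hDp, ← hs] at hsum
  simp only [negMulLog] at hsum ⊢
  nlinarith [hsum]
variable {n : ℕ} {A : Matrix (Fin n) (Fin n) ℂ}


lemma trace_eq_sum_eigs (hA : A.IsHermitian) : A.trace = ∑ i, (hA.eigenvalues i : ℂ) := by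
  conv_lhs => rw [hA.spectral_theorem, Unitary.conjStarAlgAut_apply]
  rw [Matrix.trace_mul_comm, ← mul_assoc,
    (Matrix.mem_unitaryGroup_iff').mp (Matrix.IsHermitian.eigenvectorUnitary hA).2, one_mul,
    Matrix.trace_diagonal]
  rfl


lemma inner_mulVec_basis (hA : A.IsHermitian) (x : EuclideanSpace ℂ (Fin n)) (i : Fin n) :
    ⟪hA.eigenvectorBasis i, WithLp.toLp 2 (A *ᵥ x)⟫_ℂ
      = (hA.eigenvalues i : ℂ) * ⟪hA.eigenvectorBasis i, x⟫_ℂ := by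
  rw [EuclideanSpace.inner_eq_star_dotProduct, EuclideanSpace.inner_eq_star_dotProduct]
  have h1 : star (⇑(hA.eigenvectorBasis i)) ᵥ* A
      = hA.eigenvalues i • star (⇑(hA.eigenvectorBasis i)) := by
    have h2 : star (A *ᵥ ⇑(hA.eigenvectorBasis i)) = star ⇑(hA.eigenvectorBasis i) ᵥ* Aᴴ :=
      Matrix.star_mulVec _ _
    rw [hA.eq] at h2
    rw [← h2, hA.mulVec_eigenvectorBasis, star_smul, star_trivial]
  show (A *ᵥ x) ⬝ᵥ star (⇑(hA.eigenvectorBasis i)) = _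
  rw [dotProduct_comm, Matrix.dotProduct_mulVec, h1, smul_dotProduct, dotProduct_comm]
  show hA.eigenvalues i • ((x : Fin n → ℂ) ⬝ᵥ star (⇑(hA.eigenvectorBasis i))) = _
  rw [Complex.real_smul]

lemma quadForm_eq_sum (hA : A.IsHermitian) (x : EuclideanSpace ℂ (Fin n)) :
    ⟪x, WithLp.toLp 2 (A *ᵥ x)⟫_ℂ
      = ((∑ i, hA.eigenvalues i * ‖hA.eigenvectorBasis.repr x i‖ ^ 2 : ℝ) : ℂ) := by
  rw [← OrthonormalBasis.sum_inner_mul_inner hA.eigenvectorBasis]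
  push_cast
  refine Finset.sum_congr rfl fun i _ => ?_
  rw [inner_mulVec_basis, ← hA.eigenvectorBasis.repr_apply_apply,
    ← inner_conj_symm x (hA.eigenvectorBasis i), ← hA.eigenvectorBasis.repr_apply_apply]
  set c := hA.eigenvectorBasis.repr x i
  rw [show ((starRingEnd ℂ) c) * ((hA.eigenvalues i : ℂ) * c)
      = (hA.eigenvalues i : ℂ) * ((starRingEnd ℂ) c * c) by ring, RCLike.conj_mul]
  rfl

lemma repr_zero_of_span {ι' : Type*} (b : OrthonormalBasis (Fin n) ℂ (EuclideanSpace ℂ (Fin n)))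
    (g : ι' → Fin n) {x : EuclideanSpace ℂ (Fin n)}
    (hx : x ∈ Submodule.span ℂ (Set.range fun i => b (g i))) {j : Fin n}
    (hj : ∀ i, g i ≠ j) : b.repr x j = 0 := by
  rw [b.repr_apply_apply]
  induction hx using Submodule.span_induction with
  | mem y hy =>
    obtain ⟨i, rfl⟩ := hy
    have := b.orthonormal
    rw [orthonormal_iff_ite] at this
    rw [this j (g i), if_neg (fun h => hj i h.symm)]
  | zero => exact inner_zero_right _
  | add y z _ _ hy hz => rw [inner_add_right, hy, hz, add_zero]
  | smul c y _ hy => rw [inner_smul_right, hy, mul_zero]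

lemma sum_norm_repr_sq (b : OrthonormalBasis (Fin n) ℂ (EuclideanSpace ℂ (Fin n)))
    (x : EuclideanSpace ℂ (Fin n)) : ∑ j, ‖b.repr x j‖ ^ 2 = ‖x‖ ^ 2 := by
  have h1 : ‖b.repr x‖ = ‖x‖ := b.repr.norm_map x
  have h2 := EuclideanSpace.norm_eq (b.repr x)
  rw [← h1, h2, Real.sq_sqrt (Finset.sum_nonneg fun j _ => by positivity)]

lemma card_ge (k : Fin n) : Fintype.card {i : Fin n // k ≤ i} = n - k := by
  rw [Fintype.card_subtype]
  rw [show Finset.filter (fun i => k ≤ i) Finset.univ = Finset.Ici k from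
    Finset.filter_le_eq_Ici]
  exact Fin.card_Ici k

lemma card_le (k : Fin n) : Fintype.card {i : Fin n // i ≤ k} = k + 1 := by
  rw [Fintype.card_subtype]
  rw [show Finset.filter (fun i => i ≤ k) Finset.univ = Finset.Iic k from
    Finset.filter_ge_eq_Iic]
  exact Fin.card_Iic k
lemma weyl_mono {A B : Matrix (Fin n) (Fin n) ℂ} (hA : A.IsHermitian) (hB : B.IsHermitian)
    (hAB : (B - A).PosSemidef) {pA pB : Equiv.Perm (Fin n)}
    (hpA : Monotone (hA.eigenvalues ∘ pA)) (hpB : Monotone (hB.eigenvalues ∘ pB))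
    (k : Fin n) : hA.eigenvalues (pA k) ≤ hB.eigenvalues (pB k) := by
  classical
  set bA := hA.eigenvectorBasis with hbA
  set bB := hB.eigenvectorBasis with hbB
  let fA : {i : Fin n // k ≤ i} → EuclideanSpace ℂ (Fin n) := fun i => bA (pA i)
  let fB : {i : Fin n // i ≤ k} → EuclideanSpace ℂ (Fin n) := fun i => bB (pB i)
  set V := Submodule.span ℂ (Set.range fA) with hV
  set W := Submodule.span ℂ (Set.range fB) with hW
  have hliA : LinearIndependent ℂ fA :=
    (bA.orthonormal.comp _ (fun i j h => Subtype.ext (pA.injective h))).linearIndependent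
  have hliB : LinearIndependent ℂ fB :=
    (bB.orthonormal.comp _ (fun i j h => Subtype.ext (pB.injective h))).linearIndependent
  have dimV : finrank ℂ V = n - k := by rw [hV, finrank_span_eq_card hliA, card_ge]
  have dimW : finrank ℂ W = k + 1 := by rw [hW, finrank_span_eq_card hliB, card_le]
  have hsum := Submodule.finrank_sup_add_finrank_inf_eq V W
  have hle : finrank ℂ ↥(V ⊔ W) ≤ n :=
    (Submodule.finrank_le _).trans_eq finrank_euclideanSpace_fin
  have hkn : (k : ℕ) < n := k.isLt
  have hpos : 0 < finrank ℂ ↥(V ⊓ W) := by omega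
  have hne : V ⊓ W ≠ ⊥ := by
    intro h
    rw [h, finrank_bot] at hpos
    omega
  obtain ⟨x, hxVW, hx0⟩ := Submodule.exists_mem_ne_zero_of_ne_bot hne
  -- quadratic forms
  set qA := ∑ j, hA.eigenvalues j * ‖bA.repr x j‖ ^ 2 with hqA
  set qB := ∑ j, hB.eigenvalues j * ‖bB.repr x j‖ ^ 2 with hqB
  have hnormpos : 0 < ‖x‖ ^ 2 := by
    have := norm_pos_iff.mpr hx0
    positivity
  -- lower bound for qA
  have lowA : hA.eigenvalues (pA k) * ‖x‖ ^ 2 ≤ qA := by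
    rw [← sum_norm_repr_sq bA x, Finset.mul_sum, hqA]
    refine Finset.sum_le_sum fun j _ => ?_
    rcases eq_or_ne (bA.repr x j) 0 with h0 | h0
    · simp [h0]
    have hex : ∃ i : {i : Fin n // k ≤ i}, pA i = j := by
      by_contra hc
      push_neg at hc
      exact h0 (repr_zero_of_span bA (fun i : {i : Fin n // k ≤ i} => pA i) hxVW.1 hc)
    obtain ⟨i, rfl⟩ := hex
    have : hA.eigenvalues (pA k) ≤ hA.eigenvalues (pA i) := hpA i.2
    have hsq : (0:ℝ) ≤ ‖bA.repr x (pA i)‖ ^ 2 := by positivity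
    nlinarith
  have upB : qB ≤ hB.eigenvalues (pB k) * ‖x‖ ^ 2 := by
    rw [← sum_norm_repr_sq bB x, Finset.mul_sum, hqB]
    refine Finset.sum_le_sum fun j _ => ?_
    rcases eq_or_ne (bB.repr x j) 0 with h0 | h0
    · simp [h0]
    have hex : ∃ i : {i : Fin n // i ≤ k}, pB i = j := by
      by_contra hc
      push_neg at hc
      exact h0 (repr_zero_of_span bB (fun i : {i : Fin n // i ≤ k} => pB i) hxVW.2 hc)
    obtain ⟨i, rfl⟩ := hex
    have : hB.eigenvalues (pB i) ≤ hB.eigenvalues (pB k) := hpB i.2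
    have hsq : (0:ℝ) ≤ ‖bB.repr x (pB i)‖ ^ 2 := by positivity
    nlinarith
  -- psd bridge
  have eA : star (x : Fin n → ℂ) ⬝ᵥ (A *ᵥ x) = ((qA : ℝ) : ℂ) := by
    rw [dotProduct_comm]; exact quadForm_eq_sum hA x
  have eB : star (x : Fin n → ℂ) ⬝ᵥ (B *ᵥ x) = ((qB : ℝ) : ℂ) := by
    rw [dotProduct_comm]; exact quadForm_eq_sum hB x
  have hpsd := hAB.dotProduct_mulVec_nonneg (x : Fin n → ℂ)
  rw [Matrix.sub_mulVec, dotProduct_sub, eA, eB] at hpsd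
  have hqle : qA ≤ qB := by
    rw [sub_nonneg] at hpsd
    exact_mod_cast hpsd
  have := le_trans lowA (le_trans hqle upB)
  exact le_of_mul_le_mul_right this hnormpos
lemma jordan {C : Matrix (Fin n) (Fin n) ℂ} (hC : C.IsHermitian) :
    ∃ P N : Matrix (Fin n) (Fin n) ℂ, P.PosSemidef ∧ N.PosSemidef ∧ C = P - N ∧
      P.trace = ((∑ i, max (hC.eigenvalues i) 0 : ℝ) : ℂ) ∧
      N.trace = ((∑ i, max (-hC.eigenvalues i) 0 : ℝ) : ℂ) := by
  classical
  set U : Matrix (Fin n) (Fin n) ℂ := (hC.eigenvectorUnitary : Matrix (Fin n) (Fin n) ℂ) with hU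
  set dP : Fin n → ℂ := fun i => ((max (hC.eigenvalues i) 0 : ℝ) : ℂ) with hdP
  set dN : Fin n → ℂ := fun i => ((max (-hC.eigenvalues i) 0 : ℝ) : ℂ) with hdN
  have trconj : ∀ d : Fin n → ℂ, (U * diagonal d * star U).trace = ∑ i, d i := by
    intro d
    rw [Matrix.trace_mul_comm, ← mul_assoc,
      (Matrix.mem_unitaryGroup_iff').mp (Matrix.IsHermitian.eigenvectorUnitary hC).2, one_mul,
      Matrix.trace_diagonal]
  have psd : ∀ d : Fin n → ℝ, (∀ i, 0 ≤ d i) →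
      (U * diagonal (fun i => ((d i : ℝ) : ℂ)) * star U).PosSemidef := by
    intro d hd
    have hdiag : (diagonal fun i => ((d i : ℝ) : ℂ)).PosSemidef := by
      refine Matrix.PosSemidef.diagonal fun i => ?_
      simpa using Complex.zero_le_real.mpr (hd i)
    exact hdiag.mul_mul_conjTranspose_same U
  refine ⟨U * diagonal dP * star U, U * diagonal dN * star U,
    psd _ (fun i => le_max_right _ _), psd _ (fun i => le_max_right _ _), ?_, ?_, ?_⟩
  · symm
    have key : diagonal dP - diagonal dN
        = diagonal ((RCLike.ofReal ∘ hC.eigenvalues) : Fin n → ℂ) := by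
      have hvec : (fun i => dP i - dN i)
          = ((RCLike.ofReal ∘ hC.eigenvalues) : Fin n → ℂ) := by
        funext i
        simp only [hdP, hdN, Function.comp_apply]
        rw [← Complex.ofReal_sub, max_zero_sub_max_neg_zero_eq_self]
        rfl
      rw [Matrix.diagonal_sub, hvec]
    calc U * diagonal dP * star U - U * diagonal dN * star U
        = U * (diagonal dP - diagonal dN) * star U := by rw [mul_sub, sub_mul]
      _ = U * diagonal ((RCLike.ofReal ∘ hC.eigenvalues) : Fin n → ℂ) * star U := by rw [key]
      _ = C := hC.spectral_theorem.symm
  · rw [trconj]; push_cast; rfl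
  · rw [trconj]; push_cast; rfl
lemma sum_abs_sorted_le {A B : Matrix (Fin n) (Fin n) ℂ}
    (hA : A.IsHermitian) (hB : B.IsHermitian) (hC : (A - B).IsHermitian) :
    ∑ k, |hA.eigenvalues (Tuple.sort hA.eigenvalues k)
          - hB.eigenvalues (Tuple.sort hB.eigenvalues k)|
      ≤ ∑ i, |hC.eigenvalues i| := by
  classical
  obtain ⟨P, N, hP, hN, hPN, htP, htN⟩ := jordan hC
  have h1 : (B + P).IsHermitian := hB.add hP.1
  have h2 : (A + N).IsHermitian := hA.add hN.1
  have e1 : (B + P) - A = N := by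
    have h : A - B = P - N := hPN
    have : (B + P) - A = P - (A - B) := by abel
    rw [this, h]
    abel
  have e2 : (A + N) - B = P := by
    have h : A - B = P - N := hPN
    have : (A + N) - B = (A - B) + N := by abel
    rw [this, h]
    abel
  have e3 : (B + P) - B = P := by abel
  have e4 : (A + N) - A = N := by abel
  set pA := Tuple.sort hA.eigenvalues
  set pB := Tuple.sort hB.eigenvalues
  set p1 := Tuple.sort h1.eigenvalues
  set p2 := Tuple.sort h2.eigenvalues
  have mA := Tuple.monotone_sort hA.eigenvalues
  have mB := Tuple.monotone_sort hB.eigenvalues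
  have m1 := Tuple.monotone_sort h1.eigenvalues
  have m2 := Tuple.monotone_sort h2.eigenvalues
  have wA1 : ∀ k, hA.eigenvalues (pA k) ≤ h1.eigenvalues (p1 k) :=
    fun k => weyl_mono hA h1 (by rw [e1]; exact hN) mA m1 k
  have wB1 : ∀ k, hB.eigenvalues (pB k) ≤ h1.eigenvalues (p1 k) :=
    fun k => weyl_mono hB h1 (by rw [e3]; exact hP) mB m1 k
  have wA2 : ∀ k, hA.eigenvalues (pA k) ≤ h2.eigenvalues (p2 k) :=
    fun k => weyl_mono hA h2 (by rw [e4]; exact hN) mA m2 k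
  have wB2 : ∀ k, hB.eigenvalues (pB k) ≤ h2.eigenvalues (p2 k) :=
    fun k => weyl_mono hB h2 (by rw [e2]; exact hP) mB m2 k
  -- termwise bound
  have hterm : ∀ k, |hA.eigenvalues (pA k) - hB.eigenvalues (pB k)|
      ≤ (h1.eigenvalues (p1 k) - hB.eigenvalues (pB k))
        + (h2.eigenvalues (p2 k) - hA.eigenvalues (pA k)) := by
    intro k
    rw [abs_sub_le_iff]
    constructor
    · have := wA1 k; have := wB2 k; have := wA2 k; linarith
    · have := wB2 k; have := wB1 k; have := wA1 k; linarith
  have hsum := Finset.sum_le_sum (fun k (_ : k ∈ Finset.univ) => hterm k)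
  -- evaluate the permuted sums
  have sA : ∑ k, hA.eigenvalues (pA k) = ∑ i, hA.eigenvalues i := Equiv.sum_comp pA _
  have sB : ∑ k, hB.eigenvalues (pB k) = ∑ i, hB.eigenvalues i := Equiv.sum_comp pB _
  have s1 : ∑ k, h1.eigenvalues (p1 k) = ∑ i, h1.eigenvalues i := Equiv.sum_comp p1 _
  have s2 : ∑ k, h2.eigenvalues (p2 k) = ∑ i, h2.eigenvalues i := Equiv.sum_comp p2 _
  -- trace identities
  set tP := ∑ i, max (hC.eigenvalues i) 0 with htPdef
  set tN := ∑ i, max (-hC.eigenvalues i) 0 with htNdef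
  have tr1 : ∑ i, h1.eigenvalues i = (∑ i, hB.eigenvalues i) + tP := by
    have hth := trace_eq_sum_eigs h1
    rw [Matrix.trace_add, trace_eq_sum_eigs hB, htP] at hth
    exact_mod_cast hth.symm
  have tr2 : ∑ i, h2.eigenvalues i = (∑ i, hA.eigenvalues i) + tN := by
    have hth := trace_eq_sum_eigs h2
    rw [Matrix.trace_add, trace_eq_sum_eigs hA, htN] at hth
    exact_mod_cast hth.symm
  have habs : ∑ i, |hC.eigenvalues i| = tP + tN := by
    rw [htPdef, htNdef, ← Finset.sum_add_distrib]
    refine Finset.sum_congr rfl fun i _ => ?_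
    exact (max_zero_add_max_neg_zero_eq_abs_self _).symm
  rw [Finset.sum_add_distrib, Finset.sum_sub_distrib, Finset.sum_sub_distrib,
    sA, sB, s1, s2, tr1, tr2] at hsum
  rw [habs]
  linarith

/-- Von Neumann entropy of a Hermitian matrix, via its eigenvalues. -/
noncomputable def vnEntropy {D : ℕ} {ρ : Matrix (Fin D) (Fin D) ℂ}
    (h : ρ.IsHermitian) : ℝ :=
  ∑ i, Real.negMulLog (h.eigenvalues i)

/-- Trace norm of a Hermitian matrix: sum of absolute values of eigenvalues. -/
noncomputable def traceNormH {D : ℕ} {A : Matrix (Fin D) (Fin D) ℂ}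
    (h : A.IsHermitian) : ℝ :=
  ∑ i, |h.eigenvalues i|

/-- Binary entropy `H₂(x) = −x log x − (1−x) log(1−x)`. -/
noncomputable def binEnt (x : ℝ) : ℝ := Real.negMulLog x + Real.negMulLog (1 - x)

/-- Fannes' inequality: density matrices close in trace norm have close entropies. -/
theorem fannes_inequality {D : ℕ} (θ : ℝ)
    (ρ σ : Matrix (Fin D) (Fin D) ℂ)
    (hρ : ρ.PosSemidef) (hρ1 : ρ.trace = 1)
    (hσ : σ.PosSemidef) (hσ1 : σ.trace = 1)
    (hθe : θ ≤ 1 / Real.exp 1)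
    (hclose : traceNormH (hρ.1.sub hσ.1) ≤ θ) :
    |vnEntropy hρ.1 - vnEntropy hσ.1| ≤ θ * Real.log D + binEnt θ := by
  classical
  have hD : 0 < D := by
    rcases Nat.eq_zero_or_pos D with hd | hd
    · exfalso
      subst hd
      have h0 : ρ.trace = 0 := by simp [Matrix.trace]
      rw [h0] at hρ1
      exact one_ne_zero hρ1.symm
    · exact hd
  set a := hρ.1.eigenvalues with ha
  set b := hσ.1.eigenvalues with hb
  have ha0 : ∀ i, 0 ≤ a i := hρ.eigenvalues_nonneg
  have hb0 : ∀ i, 0 ≤ b i := hσ.eigenvalues_nonneg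
  have haS : ∑ i, a i = 1 := by
    have h := trace_eq_sum_eigs hρ.1
    rw [hρ1] at h
    exact_mod_cast h.symm
  have hbS : ∑ i, b i = 1 := by
    have h := trace_eq_sum_eigs hσ.1
    rw [hσ1] at h
    exact_mod_cast h.symm
  have ha1 : ∀ i, a i ≤ 1 := fun i =>
    haS ▸ Finset.single_le_sum (fun j _ => ha0 j) (Finset.mem_univ i)
  have hb1 : ∀ i, b i ≤ 1 := fun i =>
    hbS ▸ Finset.single_le_sum (fun j _ => hb0 j) (Finset.mem_univ i)
  set pA := Tuple.sort a with hpA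
  set pB := Tuple.sort b with hpB
  set ε : Fin D → ℝ := fun k => |a (pA k) - b (pB k)| with hε
  have hε0 : ∀ k, 0 ≤ ε k := fun k => abs_nonneg _
  have hεsum : ∑ k, ε k ≤ θ := by
    have h := sum_abs_sorted_le hρ.1 hσ.1 (hρ.1.sub hσ.1)
    exact h.trans hclose
  have hθe' : θ ≤ (Real.exp 1)⁻¹ := by rwa [one_div] at hθe
  have hθ0 : 0 ≤ θ := le_trans (Finset.sum_nonneg fun k _ => hε0 k) hεsum
  have hθ1 : θ ≤ 1 := by
    have : (Real.exp 1)⁻¹ ≤ 1 := by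
      rw [inv_le_one_iff₀]
      right
      exact Real.one_le_exp zero_le_one
    linarith
  have hεk : ∀ k, ε k ≤ (Real.exp 1)⁻¹ := fun k =>
    le_trans (Finset.single_le_sum (fun j _ => hε0 j) (Finset.mem_univ k))
      (hεsum.trans hθe')
  have hSA : vnEntropy hρ.1 = ∑ k, Real.negMulLog (a (pA k)) :=
    (Equiv.sum_comp pA fun i => Real.negMulLog (a i)).symm
  have hSB : vnEntropy hσ.1 = ∑ k, Real.negMulLog (b (pB k)) :=
    (Equiv.sum_comp pB fun i => Real.negMulLog (b i)).symm
  calc |vnEntropy hρ.1 - vnEntropy hσ.1|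
      = |∑ k, (Real.negMulLog (a (pA k)) - Real.negMulLog (b (pB k)))| := by
        rw [hSA, hSB, Finset.sum_sub_distrib]
    _ ≤ ∑ k, |Real.negMulLog (a (pA k)) - Real.negMulLog (b (pB k))| :=
        Finset.abs_sum_le_sum_abs _ _
    _ ≤ ∑ k, Real.negMulLog (ε k) :=
        Finset.sum_le_sum fun k _ =>
          etaDiff (ha0 _) (hb0 _) (ha1 _) (hb1 _) (hεk k)
    _ ≤ (∑ k, ε k) * Real.log (Fintype.card (Fin D)) + Real.negMulLog (∑ k, ε k) :=
        sumEta ε hε0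
    _ ≤ θ * Real.log D + binEnt θ := by
        rw [Fintype.card_fin]
        have hlog : 0 ≤ Real.log D := Real.log_nonneg (by exact_mod_cast hD)
        have m1 : (∑ k, ε k) * Real.log D ≤ θ * Real.log D :=
          mul_le_mul_of_nonneg_right hεsum hlog
        have m2 : Real.negMulLog (∑ k, ε k) ≤ Real.negMulLog θ :=
          etaMono (Finset.sum_nonneg fun k _ => hε0 k) hεsum hθe'
        have m3 : 0 ≤ Real.negMulLog (1 - θ) :=
          Real.negMulLog_nonneg (by linarith) (by linarith)
        rw [binEnt]
        linarith
end

section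
/- If ensembles satisfy (1−θ)T₀ ≤ T ≤ (1+θ)T₀ as an inequality of Choi–Jamiołkowski operators, i.e., (1−θ)Ω₀ ≤ Ω ≤ (1+θ)Ω₀ in the positive semidefinite order, then for every density matrix ρ₁₂ on C^d ⊗ C^m, ‖(T ⊗ id)(ρ₁₂) − (T₀ ⊗ id)(ρ₁₂)‖₁ ≤ 2θ. -/
open Matrix Kronecker BigOperators
open scoped ComplexOrder

/-- The action of `T ⊗ id` on a bipartite matrix, applying `T` to the first factor. -/
noncomputable def applyFirst {d m : ℕ}
    (T : Matrix (Fin d) (Fin d) ℂ →ₗ[ℂ] Matrix (Fin d) (Fin d) ℂ)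
    (M : Matrix (Fin d × Fin m) (Fin d × Fin m) ℂ) :
    Matrix (Fin d × Fin m) (Fin d × Fin m) ℂ :=
  Matrix.of (fun p q => (T (Matrix.of fun a b => M (a, p.2) (b, q.2))) p.1 q.1)

/-- Trace norm: the sum of singular values of `A`. -/
noncomputable def traceNorm {n : Type*} [Fintype n] [DecidableEq n]
    (A : Matrix n n ℂ) : ℝ :=
  ∑ i, Real.sqrt ((Matrix.isHermitian_mul_conjTranspose_self Aᴴ).eigenvalues i)

/-! ### Auxiliary lemmas -/

lemma applyFirst_entry {d m : ℕ} (Λ : Matrix (Fin d) (Fin d) ℂ →ₗ[ℂ] Matrix (Fin d) (Fin d) ℂ)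
    (M : Matrix (Fin d × Fin m) (Fin d × Fin m) ℂ) (i j : Fin d) (k l : Fin m) :
    applyFirst Λ M (i,k) (j,l) = ∑ a, ∑ b, M (a,k) (b,l) * (Λ (Matrix.single a b 1)) i j := by
  have h : (Matrix.of fun a b => M (a, k) (b, l)) =
      ∑ a, ∑ b, M (a,k) (b,l) • Matrix.single a b (1:ℂ) := by
    ext x y
    simp [Matrix.sum_apply, Matrix.single, Matrix.of_apply, ite_and, Finset.sum_ite_eq,
      Finset.sum_ite_eq']
  simp only [applyFirst, Matrix.of_apply, h, map_sum, Matrix.sum_apply]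
  refine Finset.sum_congr rfl fun a _ => Finset.sum_congr rfl fun b _ => ?_
  rw [_root_.map_smul]
  simp

lemma choi_entry {d : ℕ} (Λ : Matrix (Fin d) (Fin d) ℂ →ₗ[ℂ] Matrix (Fin d) (Fin d) ℂ)
    (i j a b : Fin d) :
    applyFirst Λ (maxEnt d) (i,a) (j,b) = (1/(d:ℂ)) * (Λ (Matrix.single a b 1)) i j := by
  have h : (Matrix.of fun x y => maxEnt d (x, a) (y, b)) =
      (1/(d:ℂ)) • Matrix.single a b (1:ℂ) := by
    ext x y
    simp [maxEnt, Matrix.single, and_comm, eq_comm]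
  simp only [applyFirst, Matrix.of_apply, h, _root_.map_smul]
  simp

lemma perm5 {K J L A B : Type*} [Fintype K] [Fintype J] [Fintype L] [Fintype A] [Fintype B]
    (f : K → J → L → A → B → ℂ) :
    ∑ k, ∑ j, ∑ l, ∑ a, ∑ b, f k j l a b = ∑ a, ∑ j, ∑ b, ∑ k, ∑ l, f k j l a b := by
  rw [Finset.sum_comm]
  conv_lhs => enter [2, j]; rw [Finset.sum_comm]
  conv_lhs => enter [2, j, 2, l]; rw [Finset.sum_comm]
  conv_lhs => enter [2, j, 2, l, 2, a]; rw [Finset.sum_comm]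
  conv_lhs => enter [2, j]; rw [Finset.sum_comm]
  rw [Finset.sum_comm]
  conv_lhs => enter [2, a, 2, j]; rw [Finset.sum_comm]
  conv_lhs => enter [2, a, 2, j, 2, b]; rw [Finset.sum_comm]

lemma key1 {d m : ℕ} (Λ : Matrix (Fin d) (Fin d) ℂ →ₗ[ℂ] Matrix (Fin d) (Fin d) ℂ)
    (v x : Fin d × Fin m → ℂ) :
    star x ⬝ᵥ (applyFirst Λ (Matrix.of fun p q => star (v p) * v q)) *ᵥ x
      = ∑ i, ∑ a, ∑ j, ∑ b, star (∑ k, x (i,k) * v (a,k)) *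
          ((Λ (Matrix.single a b 1)) i j * ∑ l, x (j,l) * v (b,l)) := by
  have hL : star x ⬝ᵥ (applyFirst Λ (Matrix.of fun p q => star (v p) * v q)) *ᵥ x
      = ∑ i, ∑ k, ∑ j, ∑ l, ∑ a, ∑ b,
          star (x (i,k)) * ((star (v (a,k)) * v (b,l)) * ((Λ (Matrix.single a b 1)) i j * x (j,l))) := by
    simp only [dotProduct, mulVec, Fintype.sum_prod_type, applyFirst_entry, Matrix.of_apply,
      Finset.sum_mul, Finset.mul_sum, Pi.star_apply]
    refine Finset.sum_congr rfl fun i _ => Finset.sum_congr rfl fun k _ =>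
      Finset.sum_congr rfl fun j _ => Finset.sum_congr rfl fun l _ =>
      Finset.sum_congr rfl fun a _ => Finset.sum_congr rfl fun b _ => by ring
  rw [hL]
  refine Finset.sum_congr rfl fun i _ => ?_
  rw [perm5]
  simp only [star_sum, star_mul', Finset.sum_mul, Finset.mul_sum]
  refine Finset.sum_congr rfl fun a _ => Finset.sum_congr rfl fun j _ =>
    Finset.sum_congr rfl fun b _ => ?_
  rw [Finset.sum_comm]
  exact Finset.sum_congr rfl fun k _ => Finset.sum_congr rfl fun l _ => by ring

lemma applyFirst_sum {d m : ℕ} {S : Type*} (s : Finset S)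
    (Λ : Matrix (Fin d) (Fin d) ℂ →ₗ[ℂ] Matrix (Fin d) (Fin d) ℂ)
    (N : S → Matrix (Fin d × Fin m) (Fin d × Fin m) ℂ) :
    applyFirst Λ (∑ i ∈ s, N i) = ∑ i ∈ s, applyFirst Λ (N i) := by
  ext p q
  have h : (Matrix.of fun a b => (∑ i ∈ s, N i) (a, p.2) (b, q.2))
      = ∑ i ∈ s, (Matrix.of fun a b => (N i) (a, p.2) (b, q.2)) := by
    ext a b; simp [Matrix.sum_apply]
  show (Λ (Matrix.of fun a b => (∑ i ∈ s, N i) (a, p.2) (b, q.2))) p.1 q.1 = _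
  rw [h, map_sum]
  simp [Matrix.sum_apply, applyFirst]

open scoped MatrixOrder in
lemma choi_psd {d m : ℕ} (Λ : Matrix (Fin d) (Fin d) ℂ →ₗ[ℂ] Matrix (Fin d) (Fin d) ℂ)
    (hC : (applyFirst Λ (maxEnt d)).PosSemidef)
    (ρ : Matrix (Fin d × Fin m) (Fin d × Fin m) ℂ) (hρ : ρ.PosSemidef) :
    (applyFirst Λ ρ).PosSemidef := by
  rcases Nat.eq_zero_or_pos d with hd | hd
  · subst hd
    refine Matrix.PosSemidef.of_dotProduct_mulVec_nonneg ?_ ?_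
    · ext ⟨i, k⟩ q; exact i.elim0
    · intro y; simp [dotProduct]
  have hdC : (d : ℂ) ≠ 0 := Nat.cast_ne_zero.mpr hd.ne'
  have hE : ∀ a b i j, (Λ (Matrix.single a b 1)) i j
      = (d:ℂ) * applyFirst Λ (maxEnt d) (i,a) (j,b) := by
    intro a b i j
    rw [choi_entry]
    field_simp
  refine Matrix.PosSemidef.of_dotProduct_mulVec_nonneg ?_ ?_
  · -- Hermitian
    ext ⟨i, k⟩ ⟨j, l⟩
    rw [Matrix.conjTranspose_apply]
    rw [applyFirst_entry, applyFirst_entry]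
    rw [star_sum]
    rw [Finset.sum_comm]
    refine Finset.sum_congr rfl fun a _ => ?_
    rw [star_sum]
    refine Finset.sum_congr rfl fun b _ => ?_
    rw [star_mul']
    have h1 : star (ρ (a, l) (b, k)) = ρ (b, k) (a, l) := hρ.1.apply _ _
    have h2 : star ((Λ (Matrix.single a b 1)) j i) = (Λ (Matrix.single b a 1)) i j := by
      rw [hE, hE, star_mul']
      congr 1
      · simp
      · exact hC.1.apply _ _
    rw [h1, h2]
  · -- quadratic form
    intro x
    obtain ⟨B, hB⟩ := CStarAlgebra.nonneg_iff_eq_star_mul_self.mp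
      (Matrix.nonneg_iff_posSemidef.mpr hρ)
    have hdecomp : ρ = ∑ s : Fin d × Fin m, Matrix.of (fun p q => star (B s p) * B s q) := by
      rw [hB]; ext p q
      simp [Matrix.mul_apply, Matrix.conjTranspose_apply, Matrix.sum_apply,
        Matrix.star_eq_conjTranspose]
    rw [hdecomp, applyFirst_sum]
    have hsum : ∀ (M : (Fin d × Fin m) → Matrix (Fin d × Fin m) (Fin d × Fin m) ℂ),
        star x ⬝ᵥ (∑ s, M s) *ᵥ x = ∑ s, star x ⬝ᵥ (M s) *ᵥ x := by
      intro M
      simp only [dotProduct, mulVec, Matrix.sum_apply, Finset.sum_mul, Finset.mul_sum]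
      conv_lhs => enter [2, p]; rw [Finset.sum_comm]
      rw [Finset.sum_comm]
    rw [hsum]
    refine Finset.sum_nonneg fun s _ => ?_
    rw [key1]
    have : ∑ i, ∑ a, ∑ j, ∑ b, star (∑ k, x (i,k) * B s (a,k)) *
          ((Λ (Matrix.single a b 1)) i j * ∑ l, x (j,l) * B s (b,l))
        = (d:ℂ) * (star (fun p : Fin d × Fin d => ∑ k, x (p.1,k) * B s (p.2,k)) ⬝ᵥ
            (applyFirst Λ (maxEnt d)) *ᵥ (fun p : Fin d × Fin d => ∑ k, x (p.1,k) * B s (p.2,k))) := by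
      simp only [dotProduct, mulVec, Fintype.sum_prod_type, Pi.star_apply, Finset.mul_sum]
      refine Finset.sum_congr rfl fun i _ => Finset.sum_congr rfl fun a _ => ?_
      refine Finset.sum_congr rfl fun j _ => Finset.sum_congr rfl fun b _ =>
        Finset.sum_congr rfl fun l _ => ?_
      rw [hE]
      ring
    rw [this]
    have hd0 : (0:ℂ) ≤ (d:ℂ) := by
      rw [Complex.le_def]
      simp
    exact mul_nonneg hd0 (hC.dotProduct_mulVec_nonneg _)

lemma eig_congr {n : Type*} [Fintype n] [DecidableEq n] {A B : Matrix n n ℂ} (h : A = B)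
    (hA : A.IsHermitian) (hB : B.IsHermitian) :
    hA.eigenvalues = hB.eigenvalues := by subst h; rfl

lemma trace_unitary_diag {n : Type*} [Fintype n] [DecidableEq n]
    (U : Matrix.unitaryGroup n ℂ) (w : n → ℝ) :
    ((U : Matrix n n ℂ) * Matrix.diagonal (Complex.ofReal ∘ w) * star (U : Matrix n n ℂ)).trace
      = ((∑ i, w i : ℝ) : ℂ) := by
  rw [Matrix.trace_mul_cycle, (Matrix.mem_unitaryGroup_iff'.mp U.2), Matrix.one_mul,
    Matrix.trace_diagonal]
  push_cast
  rfl

lemma psd_diag {n : Type*} [Fintype n] [DecidableEq n] {M : Matrix n n ℂ}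
    (h : M.PosSemidef) (i : n) : 0 ≤ M i i := by
  have := h.dotProduct_mulVec_nonneg (Pi.single i 1)
  simpa [dotProduct, Matrix.mulVec, Pi.single_apply] using this

open scoped MatrixOrder in
lemma traceNorm_hermitian {n : Type*} [Fintype n] [DecidableEq n] (X : Matrix n n ℂ)
    (hX : X.IsHermitian) : traceNorm X = ∑ i, |hX.eigenvalues i| := by
  have hMeq : Xᴴ * Xᴴᴴ = X ^ 2 := by
    rw [Matrix.conjTranspose_conjTranspose, hX.eq, pow_two]
  have psd2 : (X ^ 2).PosSemidef := by
    rw [pow_two]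
    nth_rewrite 1 [← hX.eq]
    exact Matrix.posSemidef_conjTranspose_mul_self X
  set U : Matrix n n ℂ := (hX.eigenvectorUnitary : Matrix n n ℂ) with hU
  set ev : n → ℝ := hX.eigenvalues with hev
  set S : Matrix n n ℂ := U * Matrix.diagonal (Complex.ofReal ∘ fun i => |ev i|) * star U with hS
  have hS_psd : S.PosSemidef := by
    apply Matrix.PosSemidef.mul_mul_conjTranspose_same ?_ U
    exact Matrix.posSemidef_diagonal_iff.mpr fun i => by
      simpa using Complex.zero_le_real.mpr (abs_nonneg (ev i))
  have hSU : S ^ 2 = X ^ 2 := by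
    have hUU : star U * U = 1 := Matrix.mem_unitaryGroup_iff'.mp hX.eigenvectorUnitary.2
    have habs : Matrix.diagonal (Complex.ofReal ∘ fun i => |ev i|) *
        Matrix.diagonal (Complex.ofReal ∘ fun i => |ev i|)
        = Matrix.diagonal (Complex.ofReal ∘ ev) * Matrix.diagonal (Complex.ofReal ∘ ev) := by
      rw [Matrix.diagonal_mul_diagonal, Matrix.diagonal_mul_diagonal]
      congr 1
      funext i
      simp only [Function.comp_apply, ← Complex.ofReal_mul, ← abs_mul, abs_mul_self]
    have hXspec : X = U * Matrix.diagonal (Complex.ofReal ∘ ev) * star U := by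
      have h := hX.spectral_theorem
      rw [Unitary.conjStarAlgAut_apply] at h
      exact h
    rw [hS, pow_two, pow_two, hXspec]
    calc U * Matrix.diagonal (Complex.ofReal ∘ fun i => |ev i|) * star U *
          (U * Matrix.diagonal (Complex.ofReal ∘ fun i => |ev i|) * star U)
        = U * (Matrix.diagonal (Complex.ofReal ∘ fun i => |ev i|) * (star U * U) *
            Matrix.diagonal (Complex.ofReal ∘ fun i => |ev i|)) * star U := by
          simp only [Matrix.mul_assoc]
      _ = U * (Matrix.diagonal (Complex.ofReal ∘ ev) * (star U * U) *
            Matrix.diagonal (Complex.ofReal ∘ ev)) * star U := by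
          rw [hUU, Matrix.mul_one, Matrix.mul_one, habs]
      _ = U * Matrix.diagonal (Complex.ofReal ∘ ev) * star U *
          (U * Matrix.diagonal (Complex.ofReal ∘ ev) * star U) := by
          simp only [Matrix.mul_assoc]
  have hSsqrt : S = CFC.sqrt (X ^ 2) :=
    (CFC.sqrt_unique (by rw [← pow_two]; exact hSU) (Matrix.nonneg_iff_posSemidef.mpr hS_psd)).symm
  have htrS : S.trace = ((∑ i, |ev i| : ℝ) : ℂ) := trace_unitary_diag hX.eigenvectorUnitary _
  have htrS' : (CFC.sqrt (X ^ 2)).trace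
      = ((∑ i, Real.sqrt (psd2.1.eigenvalues i) : ℝ) : ℂ) := by
    rw [CFC.sqrt_eq_cfc, cfc_nnreal_eq_real _ (X ^ 2), psd2.1.cfc_eq, Matrix.IsHermitian.cfc,
      Unitary.conjStarAlgAut_apply]
    rw [← trace_unitary_diag psd2.1.eigenvectorUnitary]
    congr 4
    funext i
    simp [Real.coe_sqrt, max_eq_left (psd2.eigenvalues_nonneg i)]
  have hsum : (∑ i, Real.sqrt (psd2.1.eigenvalues i) : ℝ) = ∑ i, |ev i| := by
    have := htrS'.symm.trans (hSsqrt ▸ htrS)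
    exact_mod_cast this
  have htn : traceNorm X = ∑ i, Real.sqrt (psd2.1.eigenvalues i) := by
    unfold traceNorm
    have := eig_congr hMeq (Matrix.isHermitian_mul_conjTranspose_self Xᴴ) psd2.1
    rw [this]
  rw [htn, hsum]

lemma traceNorm_sub_le_of_psd {n : Type*} [Fintype n] [DecidableEq n]
    {P Q : Matrix n n ℂ} (hP : P.PosSemidef) (hQ : Q.PosSemidef) :
    traceNorm (P - Q) ≤ P.trace.re + Q.trace.re := by
  have hX : (P - Q).IsHermitian := hP.1.sub hQ.1
  rw [traceNorm_hermitian _ hX]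
  set U : Matrix n n ℂ := (hX.eigenvectorUnitary : Matrix n n ℂ) with hU
  have hUmem := hX.eigenvectorUnitary.2
  have hdiag : star U * (P - Q) * U = Matrix.diagonal (Complex.ofReal ∘ hX.eigenvalues) :=
    by
      have h := hX.conjStarAlgAut_star_eigenvectorUnitary
      rw [Unitary.conjStarAlgAut_star_apply] at h
      exact h
  have hP' : (star U * P * U).PosSemidef := by
    have := hP.conjTranspose_mul_mul_same U
    rwa [← Matrix.star_eq_conjTranspose] at this
  have hQ' : (star U * Q * U).PosSemidef := by
    have := hQ.conjTranspose_mul_mul_same U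
    rwa [← Matrix.star_eq_conjTranspose] at this
  have hsplit : star U * (P - Q) * U = star U * P * U - star U * Q * U := by
    rw [Matrix.mul_sub, Matrix.sub_mul]
  have hkey : ∀ i, |hX.eigenvalues i|
      ≤ ((star U * P * U) i i).re + ((star U * Q * U) i i).re := by
    intro i
    have h1 : 0 ≤ (star U * P * U) i i := psd_diag hP' i
    have h2 : 0 ≤ (star U * Q * U) i i := psd_diag hQ' i
    have h1' := (Complex.le_def.mp h1).1
    have h2' := (Complex.le_def.mp h2).1
    have hEq : (Complex.ofReal (hX.eigenvalues i))
        = (star U * P * U) i i - (star U * Q * U) i i := by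
      rw [← Matrix.sub_apply, ← hsplit, hdiag]
      simp
    have hre : hX.eigenvalues i = ((star U * P * U) i i).re - ((star U * Q * U) i i).re := by
      have := congrArg Complex.re hEq
      simpa using this
    rw [hre]
    rw [abs_le]
    constructor <;> simp at h1' h2' <;> nlinarith
  calc ∑ i, |hX.eigenvalues i|
      ≤ ∑ i, (((star U * P * U) i i).re + ((star U * Q * U) i i).re) :=
        Finset.sum_le_sum fun i _ => hkey i
    _ = (star U * P * U).trace.re + (star U * Q * U).trace.re := by
        rw [Finset.sum_add_distrib]
        simp [Matrix.trace, Matrix.diag, Complex.re_sum]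
    _ = P.trace.re + Q.trace.re := by
        have hPtr : (star U * P * U).trace = P.trace := by
          rw [Matrix.trace_mul_cycle,
            Matrix.mem_unitaryGroup_iff.mp hUmem, Matrix.one_mul]
        have hQtr : (star U * Q * U).trace = Q.trace := by
          rw [Matrix.trace_mul_cycle,
            Matrix.mem_unitaryGroup_iff.mp hUmem, Matrix.one_mul]
        rw [hPtr, hQtr]

lemma applyFirst_linear {d m : ℕ}
    (T T₀ : Matrix (Fin d) (Fin d) ℂ →ₗ[ℂ] Matrix (Fin d) (Fin d) ℂ) (c : ℂ)
    (M : Matrix (Fin d × Fin m) (Fin d × Fin m) ℂ) :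
    applyFirst (T - c • T₀) M = applyFirst T M - c • applyFirst T₀ M := by
  ext p q
  simp [applyFirst, LinearMap.sub_apply, LinearMap.smul_apply, Matrix.sub_apply]

lemma trace_applyFirst {d m : ℕ}
    (T : Matrix (Fin d) (Fin d) ℂ →ₗ[ℂ] Matrix (Fin d) (Fin d) ℂ)
    (hTP : ∀ ρ : Matrix (Fin d) (Fin d) ℂ, (T ρ).trace = ρ.trace)
    (M : Matrix (Fin d × Fin m) (Fin d × Fin m) ℂ) :
    (applyFirst T M).trace = M.trace := by
  simp only [Matrix.trace, Matrix.diag, Fintype.sum_prod_type]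
  rw [Finset.sum_comm]
  conv_rhs => rw [Finset.sum_comm]
  refine Finset.sum_congr rfl fun k _ => ?_
  have := hTP (Matrix.of fun a b => M (a,k) (b,k))
  simpa [Matrix.trace, Matrix.diag, applyFirst] using this

lemma psd_smul_real {n : Type*} [Fintype n] [DecidableEq n] {M : Matrix n n ℂ}
    (h : M.PosSemidef) {c : ℝ} (hc : 0 ≤ c) : (((c : ℝ) : ℂ) • M).PosSemidef := by
  refine Matrix.PosSemidef.of_dotProduct_mulVec_nonneg ?_ ?_
  · rw [Matrix.IsHermitian, Matrix.conjTranspose_smul, h.1.eq]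
    congr 1
    simp [Complex.conj_ofReal]
  · intro x
    rw [smul_mulVec, dotProduct_smul, smul_eq_mul]
    exact mul_nonneg (Complex.zero_le_real.mpr hc) (h.dotProduct_mulVec_nonneg x)

/-- If the Choi operators of two CPTP maps satisfy `(1−θ)Ω₀ ≤ Ω ≤ (1+θ)Ω₀`, then on
every bipartite density matrix the outputs of `T ⊗ id` and `T₀ ⊗ id` are within trace
distance `2θ`. -/
theorem choi_sandwich_implies_trace_norm_close {d m : ℕ} (θ : ℝ) (hθ : 0 ≤ θ)
    (T T₀ : Matrix (Fin d) (Fin d) ℂ →ₗ[ℂ] Matrix (Fin d) (Fin d) ℂ)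
    (hCP : ∀ (m' : ℕ) (ρ : Matrix (Fin d × Fin m') (Fin d × Fin m') ℂ),
      ρ.PosSemidef → (applyFirst T ρ).PosSemidef)
    (hCP₀ : ∀ (m' : ℕ) (ρ : Matrix (Fin d × Fin m') (Fin d × Fin m') ℂ),
      ρ.PosSemidef → (applyFirst T₀ ρ).PosSemidef)
    (hTP : ∀ ρ : Matrix (Fin d) (Fin d) ℂ, (T ρ).trace = ρ.trace)
    (hTP₀ : ∀ ρ : Matrix (Fin d) (Fin d) ℂ, (T₀ ρ).trace = ρ.trace)
    (hlow : (applyFirst T (maxEnt d) - ((1 - θ : ℝ) : ℂ) • applyFirst T₀ (maxEnt d)).PosSemidef)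
    (hhigh : (((1 + θ : ℝ) : ℂ) • applyFirst T₀ (maxEnt d) - applyFirst T (maxEnt d)).PosSemidef)
    (ρ : Matrix (Fin d × Fin m) (Fin d × Fin m) ℂ)
    (hρ : ρ.PosSemidef) (hρ1 : ρ.trace = 1) :
    traceNorm (applyFirst T ρ - applyFirst T₀ ρ) ≤ 2 * θ := by
  set c₁ : ℂ := ((1 - θ : ℝ) : ℂ) with hc₁
  set Λ₁ := T - c₁ • T₀ with hΛ₁
  have hchoi : applyFirst Λ₁ (maxEnt d)
      = applyFirst T (maxEnt d) - c₁ • applyFirst T₀ (maxEnt d) :=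
    applyFirst_linear T T₀ c₁ (maxEnt d)
  have hP : (applyFirst Λ₁ ρ).PosSemidef := by
    refine choi_psd Λ₁ ?_ ρ hρ
    rw [hchoi]
    exact hlow
  have hQ0 : (applyFirst T₀ ρ).PosSemidef := hCP₀ m ρ hρ
  have hQ : (((θ : ℝ) : ℂ) • applyFirst T₀ ρ).PosSemidef := psd_smul_real hQ0 hθ
  have hdiff : applyFirst T ρ - applyFirst T₀ ρ
      = applyFirst Λ₁ ρ - ((θ : ℝ) : ℂ) • applyFirst T₀ ρ := by
    rw [hΛ₁, applyFirst_linear]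
    ext p q
    simp only [Matrix.sub_apply, Matrix.smul_apply, smul_eq_mul, hc₁]
    push_cast
    ring
  rw [hdiff]
  have hbound := traceNorm_sub_le_of_psd hP hQ
  have htrP : (applyFirst Λ₁ ρ).trace = 1 - c₁ := by
    rw [hΛ₁, applyFirst_linear, Matrix.trace_sub, Matrix.trace_smul,
      trace_applyFirst T hTP, trace_applyFirst T₀ hTP₀, hρ1]
    simp
  have htrQ : (((θ : ℝ) : ℂ) • applyFirst T₀ ρ).trace = ((θ : ℝ) : ℂ) := by
    rw [Matrix.trace_smul, trace_applyFirst T₀ hTP₀, hρ1]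
    simp
  rw [htrP, htrQ] at hbound
  have h1 : (1 - c₁).re = θ := by
    rw [hc₁]
    simp
  have h2 : (((θ : ℝ) : ℂ)).re = θ := by simp
  rw [h1, h2] at hbound
  linarith
end
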